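/- Let T : ℓ¹ → ℓ¹ be a continuous linear operator such that the sequence z = (T(e_n)) is nonatomic, where (e_n) is the standard unit vector basis of ℓ¹. Then for every bounded sequence x = (x_n) in ℓ¹ converging to zero pointwise on ℕ (in particular, for every bounded nonatomic sequence x), the sequence (T(x_n)) is nonatomic. -/

import Mathlib

set_option maxHeartbeats 1000000


open Filter Set

noncomputable def dsub (x : ℕ → lp (fun _ : ℕ => ℝ) 1) (A : Set ℕ) : ℝ :=
  Filter.limsup (fun n => ∑' j : A, |x n j|) Filter.atTop

def IsBddSeq (x : ℕ → lp (fun _ : ℕ => ℝ) 1) : Prop := ∃ C : ℝ, ∀ n, ‖x n‖ ≤ C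

/-- `x` is nonatomic: for every `ε > 0` there is a finite partition of `ℕ`
all of whose pieces have `dsub x`-value at most `ε`. -/
def Nonatomic (x : ℕ → lp (fun _ : ℕ => ℝ) 1) : Prop :=
  ∀ ε : ℝ, 0 < ε → ∃ (m : ℕ) (A : Fin m → Set ℕ),
    (⋃ i, A i) = Set.univ ∧ Pairwise (Function.onFun Disjoint A) ∧
    ∀ i, dsub x (A i) ≤ ε

noncomputable def NA (A : Set ℕ) (f : lp (fun _ : ℕ => ℝ) 1) : ℝ := ∑' j : A, |f j|

lemma summable_abs_lp (f : lp (fun _ : ℕ => ℝ) 1) : Summable (fun j => |f j|) := by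
  have h := (lp.memℓp f).summable (p := 1) (by simp)
  simpa [Real.norm_eq_abs] using h

lemma norm_lp_eq (f : lp (fun _ : ℕ => ℝ) 1) : ‖f‖ = ∑' j, |f j| := by
  have h := lp.norm_eq_tsum_rpow (p := 1) (by simp) f
  simpa [Real.norm_eq_abs] using h

lemma tsum_subtype_le' (f : ℕ → ℝ) (A : Set ℕ) (h0 : ∀ j, 0 ≤ f j) (hf : Summable f) :
    ∑' j : A, f ↑j ≤ ∑' j, f j := by
  rw [tsum_subtype]
  exact Summable.tsum_le_tsum (fun j => Set.indicator_le_self' (fun a _ => h0 a) j) (hf.indicator A) hf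

lemma NA_nonneg (A : Set ℕ) (f : lp (fun _ : ℕ => ℝ) 1) : 0 ≤ NA A f :=
  tsum_nonneg fun _ => abs_nonneg _

lemma NA_le_norm (A : Set ℕ) (f : lp (fun _ : ℕ => ℝ) 1) : NA A f ≤ ‖f‖ := by
  rw [norm_lp_eq]
  exact tsum_subtype_le' _ A (fun j => abs_nonneg _) (summable_abs_lp f)

lemma NA_lip (A : Set ℕ) (f g : lp (fun _ : ℕ => ℝ) 1) : |NA A f - NA A g| ≤ ‖f - g‖ := by
  have hf := (summable_abs_lp f).subtype A
  have hg := (summable_abs_lp g).subtype A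
  have hd := (summable_abs_lp (f - g)).subtype A
  have hd' : Summable (fun j : A => |f ↑j - g ↑j|) := by
    have : (fun j : A => |f ↑j - g ↑j|) = fun j : A => |(f - g) ↑j| := by
      funext j; simp [lp.coeFn_sub f g]
    rw [this]; exact hd
  have hsub : Summable (fun j : A => |(|f ↑j| - |g ↑j|)|) :=
    hd'.of_nonneg_of_le (fun j => abs_nonneg _) (fun j => abs_abs_sub_abs_le_abs_sub _ _)
  have h1 : NA A f - NA A g = ∑' j : A, (|f ↑j| - |g ↑j|) := (Summable.tsum_sub hf hg).symm
  rw [h1]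
  calc |∑' j : A, (|f ↑j| - |g ↑j|)| ≤ ∑' j : A, |(|f ↑j| - |g ↑j|)| := by
        have h := norm_tsum_le_tsum_norm (f := fun j : A => |f ↑j| - |g ↑j|)
          (by simpa [Real.norm_eq_abs] using hsub)
        simpa [Real.norm_eq_abs] using h
    _ ≤ ∑' j : A, |(f - g) ↑j| := by
        refine Summable.tsum_le_tsum (fun j => ?_) hsub hd
        have : (f - g) (j : ℕ) = f ↑j - g ↑j := by simp [lp.coeFn_sub f g]
        rw [this]; exact abs_abs_sub_abs_le_abs_sub _ _
    _ ≤ ‖f - g‖ := NA_le_norm A (f - g)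

lemma NA_continuous (A : Set ℕ) : Continuous (NA A) := by
  have : LipschitzWith 1 (NA A) := by
    refine LipschitzWith.of_dist_le_mul fun f g => ?_
    rw [Real.dist_eq, dist_eq_norm]
    simpa using NA_lip A f g
  exact this.continuous

lemma NA_add_le (A : Set ℕ) (f g : lp (fun _ : ℕ => ℝ) 1) :
    NA A (f + g) ≤ NA A f + NA A g := by
  have hf := (summable_abs_lp f).subtype A
  have hg := (summable_abs_lp g).subtype A
  have h : NA A f + NA A g = ∑' j : A, (|f ↑j| + |g ↑j|) := (Summable.tsum_add hf hg).symm
  rw [h]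
  have hadd := (summable_abs_lp (f + g)).subtype A
  refine Summable.tsum_le_tsum (fun j => ?_) hadd (hf.add hg)
  have : (f + g) (j : ℕ) = f ↑j + g ↑j := by simp [lp.coeFn_add f g]
  rw [this]; exact abs_add_le _ _

lemma NA_zero (A : Set ℕ) : NA A (0 : lp (fun _ : ℕ => ℝ) 1) = 0 := by
  have : ∀ j : A, |(0 : lp (fun _ : ℕ => ℝ) 1) (j : ℕ)| = 0 := by
    intro j; simp [lp.coeFn_zero]
  simp [NA, this]

lemma NA_smul (A : Set ℕ) (c : ℝ) (f : lp (fun _ : ℕ => ℝ) 1) :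
    NA A (c • f) = |c| * NA A f := by
  unfold NA
  rw [← tsum_mul_left]
  congr 1; funext j
  have : (c • f) (j : ℕ) = c * f ↑j := by simp [lp.coeFn_smul c f]
  rw [this, abs_mul]

lemma NA_sum_le (A : Set ℕ) (s : Finset ℕ) (v : ℕ → lp (fun _ : ℕ => ℝ) 1) :
    NA A (∑ k ∈ s, v k) ≤ ∑ k ∈ s, NA A (v k) := by
  classical
  induction s using Finset.induction with
  | empty => simp [NA_zero]
  | insert _ _ h ih =>
    rw [Finset.sum_insert h, Finset.sum_insert h]
    exact (NA_add_le A _ _).trans (by linarith)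

lemma NA_z_le (T : lp (fun _ : ℕ => ℝ) 1 →L[ℝ] lp (fun _ : ℕ => ℝ) 1) (A : Set ℕ) (k : ℕ) :
    NA A (T (lp.single 1 k 1)) ≤ ‖T‖ := by
  refine (NA_le_norm A _).trans ?_
  have h2 : ‖T (lp.single 1 k 1)‖ ≤ ‖T‖ * ‖(lp.single 1 k (1:ℝ) : lp (fun _ : ℕ => ℝ) 1)‖ :=
    T.le_opNorm _
  have h3 : ‖(lp.single 1 k (1:ℝ) : lp (fun _ : ℕ => ℝ) 1)‖ = 1 := by
    simpa using lp.norm_single (p := 1) (E := fun _ : ℕ => ℝ) (by norm_num)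
      (fun _ : ℕ => (1:ℝ)) k
  rw [h3, mul_one] at h2; exact h2

lemma NA_T_le (T : lp (fun _ : ℕ => ℝ) 1 →L[ℝ] lp (fun _ : ℕ => ℝ) 1)
    (x : lp (fun _ : ℕ => ℝ) 1) (A : Set ℕ) :
    NA A (T x) ≤ ∑' k, |x k| * NA A (T (lp.single 1 k 1)) := by
  have hx : HasSum (fun k => lp.single 1 k (x k)) x :=
    lp.hasSum_single (by norm_num) x
  have hkey : ∀ k : ℕ, T (lp.single 1 k (x k)) = x k • T (lp.single 1 k 1) := by
    intro k
    have h : lp.single 1 k (x k) = x k • (lp.single 1 k (1 : ℝ) : lp (fun _ : ℕ => ℝ) 1) := by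
      have h := lp.single_smul (E := fun _ : ℕ => ℝ) (𝕜 := ℝ) 1 k (x k) (1 : ℝ)
      rw [smul_eq_mul, mul_one] at h
      exact h
    rw [h, map_smul]
  have hTx : HasSum (fun k => x k • T (lp.single 1 k 1)) (T x) := by
    have h := T.hasSum hx
    simpa [hkey] using h
  have hsummaj : Summable (fun k => |x k| * NA A (T (lp.single 1 k 1))) := by
    refine Summable.of_nonneg_of_le (fun k => mul_nonneg (abs_nonneg _) (NA_nonneg A _))
      (fun k => mul_le_mul_of_nonneg_left (NA_z_le T A k) (abs_nonneg _))
      ((summable_abs_lp x).mul_right ‖T‖)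
  have hten : Tendsto (fun s : Finset ℕ => NA A (∑ k ∈ s, x k • T (lp.single 1 k 1))) atTop
      (nhds (NA A (T x))) := ((NA_continuous A).tendsto _).comp hTx
  refine le_of_tendsto hten (Filter.Eventually.of_forall fun s => ?_)
  calc NA A (∑ k ∈ s, x k • T (lp.single 1 k 1))
      ≤ ∑ k ∈ s, NA A (x k • T (lp.single 1 k 1)) := NA_sum_le A s _
    _ = ∑ k ∈ s, |x k| * NA A (T (lp.single 1 k 1)) :=
        Finset.sum_congr rfl fun k _ => NA_smul A _ _
    _ ≤ ∑' k, |x k| * NA A (T (lp.single 1 k 1)) :=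
        Summable.sum_le_tsum s (fun k _ => mul_nonneg (abs_nonneg _) (NA_nonneg A _)) hsummaj

theorem stmt_18 (T : lp (fun _ : ℕ => ℝ) 1 →L[ℝ] lp (fun _ : ℕ => ℝ) 1)
    (hz : Nonatomic (fun n => T (lp.single 1 n 1))) :
    ∀ x : ℕ → lp (fun _ : ℕ => ℝ) 1, IsBddSeq x →
      (∀ j : ℕ, Filter.Tendsto (fun n => x n j) Filter.atTop (nhds 0)) →
      Nonatomic (fun n => T (x n)) := by
  intro x hbdd hpt
  obtain ⟨C, hC⟩ := hbdd
  have hC0 : 0 ≤ C := le_trans (norm_nonneg _) (hC 0)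
  intro ε hε
  have hε'pos : 0 < ε / (4 * (C + 1)) := div_pos hε (by linarith)
  obtain ⟨m, A, hcover, hdisj, hsmall⟩ := hz (ε / (4 * (C + 1))) hε'pos
  refine ⟨m, A, hcover, hdisj, fun i => ?_⟩
  set ε' : ℝ := ε / (4 * (C + 1)) with hε'def
  have hsm : Filter.limsup (fun k => NA (A i) (T (lp.single 1 k 1))) atTop ≤ ε' :=
    hsmall i
  have hev : ∀ᶠ k in atTop, NA (A i) (T (lp.single 1 k 1)) < 2 * ε' :=
    eventually_lt_of_limsup_lt (lt_of_le_of_lt hsm (by linarith))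
      (Filter.isBoundedUnder_of ⟨‖T‖, fun k => NA_z_le T (A i) k⟩)
  obtain ⟨K, hK⟩ := Filter.eventually_atTop.mp hev
  have hbound : ∀ n, NA (A i) (T (x n)) ≤
      (∑ k ∈ Finset.range K, |x n k| * NA (A i) (T (lp.single 1 k 1))) + 2 * ε' * C := by
    intro n
    have h1 : NA (A i) (T (x n)) ≤ ∑' k, |x n k| * NA (A i) (T (lp.single 1 k 1)) :=
      NA_T_le T (x n) (A i)
    have hsum : Summable (fun k => |x n k| * NA (A i) (T (lp.single 1 k 1))) :=
      Summable.of_nonneg_of_le (fun k => mul_nonneg (abs_nonneg _) (NA_nonneg _ _))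
        (fun k => mul_le_mul_of_nonneg_left (NA_z_le T (A i) k) (abs_nonneg _))
        ((summable_abs_lp (x n)).mul_right ‖T‖)
    have hsplit :
        ∑' k, |x n k| * NA (A i) (T (lp.single 1 k 1)) =
        (∑ k ∈ Finset.range K, |x n k| * NA (A i) (T (lp.single 1 k 1))) +
          ∑' k : ℕ, |x n (k + K)| * NA (A i) (T (lp.single 1 (k + K) 1)) :=
      (Summable.sum_add_tsum_nat_add K hsum).symm
    have htail_sum : Summable (fun k : ℕ => |x n (k + K)| * NA (A i) (T (lp.single 1 (k + K) 1))) :=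
      (summable_nat_add_iff K).mpr hsum
    have habs_tail : Summable (fun k : ℕ => |x n (k + K)|) :=
      (summable_nat_add_iff K).mpr (summable_abs_lp (x n))
    have htail : ∑' k : ℕ, |x n (k + K)| * NA (A i) (T (lp.single 1 (k + K) 1)) ≤ 2 * ε' * C := by
      have step1 : ∑' k : ℕ, |x n (k + K)| * NA (A i) (T (lp.single 1 (k + K) 1)) ≤
          ∑' k : ℕ, |x n (k + K)| * (2 * ε') := by
        refine Summable.tsum_le_tsum (fun k => ?_) htail_sum (habs_tail.mul_right _)
        exact mul_le_mul_of_nonneg_left (le_of_lt (hK (k + K) (Nat.le_add_left K k)))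
          (abs_nonneg _)
      have step2 : ∑' k : ℕ, |x n (k + K)| * (2 * ε') =
          (∑' k : ℕ, |x n (k + K)|) * (2 * ε') := tsum_mul_right
      have step3 : ∑' k : ℕ, |x n (k + K)| ≤ C := by
        have hfull := Summable.sum_add_tsum_nat_add K (summable_abs_lp (x n))
        have hnn : 0 ≤ ∑ k ∈ Finset.range K, |x n k| :=
          Finset.sum_nonneg fun k _ => abs_nonneg _
        have hCn : ∑' j, |x n j| ≤ C := by rw [← norm_lp_eq]; exact hC n
        linarith
      rw [step2] at step1
      refine step1.trans ?_
      have h2 : (∑' k : ℕ, |x n (k + K)|) * (2 * ε') ≤ C * (2 * ε') :=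
        mul_le_mul_of_nonneg_right step3 (by linarith)
      linarith [h2]
    rw [hsplit] at h1
    linarith
  have hhead : Tendsto
      (fun n => ∑ k ∈ Finset.range K, |x n k| * NA (A i) (T (lp.single 1 k 1)))
      atTop (nhds 0) := by
    have h : Tendsto (fun n => ∑ k ∈ Finset.range K, |x n k| * NA (A i) (T (lp.single 1 k 1)))
        atTop (nhds (∑ k ∈ Finset.range K, (0 : ℝ))) := by
      refine tendsto_finset_sum _ fun k _ => ?_
      have h1 : Tendsto (fun n => |x n k|) atTop (nhds 0) := by
        have h2 := (hpt k).abs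
        simpa using h2
      have h3 := h1.mul_const (NA (A i) (T (lp.single 1 k 1)))
      simpa using h3
    simpa using h
  have hmaj : Tendsto
      (fun n => (∑ k ∈ Finset.range K, |x n k| * NA (A i) (T (lp.single 1 k 1))) + 2 * ε' * C)
      atTop (nhds (2 * ε' * C)) := by
    have h := hhead.add_const (2 * ε' * C)
    simpa using h
  have hls : Filter.limsup (fun n => NA (A i) (T (x n))) atTop ≤ 2 * ε' * C := by
    have hco : IsCoboundedUnder (· ≤ ·) atTop (fun n => NA (A i) (T (x n))) :=
      IsBoundedUnder.isCoboundedUnder_le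
        (Filter.isBoundedUnder_of ⟨0, fun n => NA_nonneg _ _⟩)
    have h := limsup_le_limsup (Filter.Eventually.of_forall hbound) hco
      hmaj.isBoundedUnder_le
    exact h.trans_eq hmaj.limsup_eq
  have hfin : dsub (fun n => T (x n)) (A i) ≤ 2 * ε' * C := hls
  refine hfin.trans ?_
  rw [hε'def]
  calc 2 * (ε / (4 * (C + 1))) * C = 2 * ε * C / (4 * (C + 1)) := by ring
    _ ≤ ε := by
        rw [div_le_iff₀ (by linarith : (0:ℝ) < 4 * (C + 1))]
        nlinarith
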